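/- For every v ∈ (0,1], the functions H_n(x) := f_n(x/b^n) converge uniformly on every bounded interval [0,M] to H(x) := lim_{n→∞} f_n(x/b^n), and consequently H is continuous on [0,∞). -/

import Mathlib

open Set Filter Topology

/-- For every `v ∈ (0,1]`, the functions `H_n(x) = f^[n](x/b^n)` converge uniformly on
every bounded interval `[0,M]` to `H(x) = lim_n f^[n](x/b^n)`, and consequently `H` is
continuous on `[0,∞)`. -/
theorem pcr_H_uniform_continuous (v : ℝ) (hv : v ∈ Set.Ioc (0:ℝ) 1)
    (b : ℝ) (hb : b = 1 + v)
    (f : ℝ → ℝ) (hf : ∀ x, f x = x + v * x / (1 + x))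
    (H : ℝ → ℝ)
    (hH : ∀ x : ℝ, 0 ≤ x →
      Tendsto (fun n : ℕ => f^[n] (x / b ^ n)) atTop (𝓝 (H x))) :
    (∀ M : ℝ, TendstoUniformlyOn (fun (n : ℕ) (x : ℝ) => f^[n] (x / b ^ n)) H
        atTop (Set.Icc 0 M)) ∧
    ContinuousOn H (Set.Ici 0) := by
  obtain ⟨hv0, hv1⟩ := hv
  have hb1 : 1 < b := by rw [hb]; linarith
  have hb0 : 0 < b := lt_trans one_pos hb1
  have hbne : b ≠ 0 := ne_of_gt hb0
  -- f preserves nonnegativity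
  have hfpos : ∀ x : ℝ, 0 ≤ x → 0 ≤ f x := by
    intro x hx; rw [hf]; positivity
  -- f is b-Lipschitz on [0,∞)
  have hlip : ∀ x y : ℝ, 0 ≤ x → 0 ≤ y → |f x - f y| ≤ b * |x - y| := by
    intro x y hx hy
    have h1x : (0:ℝ) < 1 + x := by linarith
    have h1y : (0:ℝ) < 1 + y := by linarith
    have key : f x - f y = (x - y) * (1 + v / ((1+x)*(1+y))) := by
      rw [hf, hf]; field_simp; ring
    rw [key, abs_mul]
    have hfac : 0 ≤ 1 + v / ((1+x)*(1+y)) := by positivity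
    rw [abs_of_nonneg hfac, mul_comm b]
    apply mul_le_mul_of_nonneg_left _ (abs_nonneg _)
    have hd : v / ((1+x)*(1+y)) ≤ v := div_le_self hv0.le (by nlinarith)
    linarith
  have hiterpos : ∀ (n : ℕ) (x : ℝ), 0 ≤ x → 0 ≤ f^[n] x := by
    intro n
    induction n with
    | zero => intro x hx; simpa using hx
    | succ n ih =>
      intro x hx
      rw [Function.iterate_succ_apply']
      exact hfpos _ (ih x hx)
  have hiterlip : ∀ (n : ℕ) (x y : ℝ), 0 ≤ x → 0 ≤ y →
      |f^[n] x - f^[n] y| ≤ b ^ n * |x - y| := by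
    intro n
    induction n with
    | zero => intro x y hx hy; simp
    | succ n ih =>
      intro x y hx hy
      rw [Function.iterate_succ_apply', Function.iterate_succ_apply']
      calc |f (f^[n] x) - f (f^[n] y)| ≤ b * |f^[n] x - f^[n] y| :=
            hlip _ _ (hiterpos n x hx) (hiterpos n y hy)
        _ ≤ b * (b ^ n * |x - y|) := by
            exact mul_le_mul_of_nonneg_left (ih x y hx hy) hb0.le
        _ = b ^ (n+1) * |x - y| := by ring
  -- one-step bound
  have hstep : ∀ (n : ℕ) (x : ℝ), 0 ≤ x →
      |f^[n] (x / b ^ n) - f^[n+1] (x / b ^ (n+1))| ≤ v * x^2 / b ^ (n+2) := by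
    intro n x hx
    have hbn : (0:ℝ) < b ^ n := pow_pos hb0 n
    have hbn1 : (0:ℝ) < b ^ (n+1) := pow_pos hb0 _
    set y := x / b ^ (n+1) with hy
    have hy0 : 0 ≤ y := by positivity
    have h1y : (0:ℝ) < 1 + y := by linarith
    rw [Function.iterate_succ_apply]
    have harg : x / b ^ n - f y = v * y^2 / (1 + y) := by
      rw [hf]
      have hxb : x / b ^ n = b * y := by
        rw [hy]; field_simp; ring
      rw [hxb, hb]; field_simp; ring
    calc |f^[n] (x / b ^ n) - f^[n] (f y)| ≤ b ^ n * |x / b ^ n - f y| :=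
          hiterlip n _ _ (by positivity) (hfpos y hy0)
      _ = b ^ n * (v * y^2 / (1 + y)) := by
          rw [harg, abs_of_nonneg (by positivity)]
      _ ≤ b ^ n * (v * y^2) := by
          apply mul_le_mul_of_nonneg_left _ hbn.le
          exact div_le_self (by positivity) (by linarith)
      _ = v * x^2 / b ^ (n+2) := by
          rw [hy]; field_simp; ring
  -- telescoping bound
  have hvb : v = b - 1 := by linarith
  have htel : ∀ (n k : ℕ) (x : ℝ), 0 ≤ x →
      |f^[n] (x / b ^ n) - f^[n+k] (x / b ^ (n+k))| ≤ x^2 / b ^ (n+1) * (1 - (1/b)^k) := by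
    intro n k x hx
    induction k with
    | zero => simp
    | succ k ih =>
      have habs : |f^[n] (x / b ^ n) - f^[n+(k+1)] (x / b ^ (n+(k+1)))| ≤
          |f^[n] (x / b ^ n) - f^[n+k] (x / b ^ (n+k))| +
          |f^[n+k] (x / b ^ (n+k)) - f^[(n+k)+1] (x / b ^ ((n+k)+1))| := by
        have := abs_sub_le (f^[n] (x / b ^ n)) (f^[n+k] (x / b ^ (n+k)))
          (f^[(n+k)+1] (x / b ^ ((n+k)+1)))
        rw [← Nat.add_assoc]; exact this
      calc |f^[n] (x / b ^ n) - f^[n+(k+1)] (x / b ^ (n+(k+1)))|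
          ≤ |f^[n] (x / b ^ n) - f^[n+k] (x / b ^ (n+k))| +
            |f^[n+k] (x / b ^ (n+k)) - f^[(n+k)+1] (x / b ^ ((n+k)+1))| := habs
        _ ≤ x^2 / b ^ (n+1) * (1 - (1/b)^k) + v * x^2 / b ^ ((n+k)+2) :=
            add_le_add ih (hstep (n+k) x hx)
        _ = x^2 / b ^ (n+1) * (1 - (1/b)^(k+1)) := by
            rw [hvb]; simp only [div_pow, one_pow]; field_simp; ring
  -- limit bound
  have hlim : ∀ (n : ℕ) (x : ℝ), 0 ≤ x →
      |f^[n] (x / b ^ n) - H x| ≤ x^2 / b ^ (n+1) := by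
    intro n x hx
    have h2 : Tendsto (fun k : ℕ => f^[n+k] (x / b ^ (n+k))) atTop (𝓝 (H x)) := by
      have := (hH x hx).comp (tendsto_add_atTop_nat n)
      simpa only [Function.comp_def, Nat.add_comm n] using this
    have h1 : Tendsto (fun k : ℕ => |f^[n] (x / b ^ n) - f^[n+k] (x / b ^ (n+k))|)
        atTop (𝓝 |f^[n] (x / b ^ n) - H x|) :=
      ((tendsto_const_nhds.sub h2)).abs
    apply le_of_tendsto h1
    filter_upwards with k
    calc |f^[n] (x / b ^ n) - f^[n+k] (x / b ^ (n+k))|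
        ≤ x^2 / b ^ (n+1) * (1 - (1/b)^k) := htel n k x hx
      _ ≤ x^2 / b ^ (n+1) * 1 := by
          apply mul_le_mul_of_nonneg_left _ (by positivity)
          have : (0:ℝ) ≤ (1/b)^k := by positivity
          linarith
      _ = x^2 / b ^ (n+1) := mul_one _
  -- uniform convergence
  have huniform : ∀ M : ℝ, TendstoUniformlyOn (fun (n : ℕ) (x : ℝ) => f^[n] (x / b ^ n)) H
      atTop (Set.Icc 0 M) := by
    intro M
    rw [Metric.tendstoUniformlyOn_iff]
    intro ε hε
    have hio : Tendsto (fun n : ℕ => M^2 * (1/b)^(n+1)) atTop (𝓝 0) := by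
      have hlt : |1/b| < 1 := by
        rw [abs_of_pos (by positivity)]
        rw [div_lt_one hb0]; exact hb1
      have h0 : Tendsto (fun n : ℕ => (1/b)^n) atTop (𝓝 0) :=
        tendsto_pow_atTop_nhds_zero_of_abs_lt_one hlt
      have h1 : Tendsto (fun n : ℕ => (1/b)^(n+1)) atTop (𝓝 0) :=
        h0.comp (tendsto_add_atTop_nat 1)
      simpa using h1.const_mul (M^2)
    have hev := hio.eventually (gt_mem_nhds hε)
    filter_upwards [hev] with n hn x hx
    obtain ⟨hx0, hxM⟩ := hx
    rw [Real.dist_eq, abs_sub_comm]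
    calc |f^[n] (x / b ^ n) - H x| ≤ x^2 / b ^ (n+1) := hlim n x hx0
      _ ≤ M^2 / b ^ (n+1) := by
          gcongr
      _ = M^2 * (1/b)^(n+1) := by rw [one_div, inv_pow, div_eq_mul_inv]
      _ < ε := hn
  refine ⟨huniform, ?_⟩
  -- continuity of each H_n on [0,∞)
  have hfeq : f = fun x : ℝ => x + v * x / (1 + x) := funext hf
  have hfc : ContinuousOn f (Set.Ici 0) := by
    rw [hfeq]
    apply ContinuousOn.add continuousOn_id
    apply ContinuousOn.div (by fun_prop) (by fun_prop)
    intro x hx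
    have hx0 : (0:ℝ) ≤ x := hx
    positivity
  have hmaps : Set.MapsTo f (Set.Ici 0) (Set.Ici 0) := fun x hx => hfpos x hx
  have hiterc : ∀ n : ℕ, ContinuousOn f^[n] (Set.Ici 0) := by
    intro n
    induction n with
    | zero => simpa using continuousOn_id
    | succ n ih =>
      rw [Function.iterate_succ']
      exact hfc.comp ih (hmaps.iterate n)
  have hHn_cont : ∀ n : ℕ, ContinuousOn (fun x : ℝ => f^[n] (x / b ^ n)) (Set.Ici 0) := by
    intro n
    apply (hiterc n).comp (by fun_prop)
    intro x hx
    exact div_nonneg hx (pow_pos hb0 n).le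
  intro x hx
  have hx0 : (0:ℝ) ≤ x := hx
  have hcM : ContinuousOn H (Set.Icc 0 (x+1)) :=
    (huniform (x+1)).continuousOn (Frequently.of_forall fun n =>
      (hHn_cont n).mono Set.Icc_subset_Ici_self)
  have hx1 : x ∈ Set.Icc 0 (x+1) := ⟨hx0, by linarith⟩
  have hmem : Set.Icc 0 (x+1) ∈ 𝓝[Set.Ici 0] x := by
    rw [← Set.Ici_inter_Iic]
    exact Filter.inter_mem self_mem_nhdsWithin
      (mem_nhdsWithin_of_mem_nhds (Iic_mem_nhds (by linarith)))
  exact (hcM x hx1).mono_of_mem_nhdsWithin hmem
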